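/- Let k be a division ring, σ an automorphism of k, and δ a σ-derivation of k. In the skew power/Laurent series division ring k_{σ,δ}((z)) (with left multiplication rule a·z = Σ_{i≥1} zⁱ (σ∘δ^{i-1})(a)), every element algebraic over k lies in k; i.e., k_{σ,δ}((z))/k is a regular extension. -/

import Mathlib

/-- `x` is algebraic over the subset `k` of the division ring `D`. -/
def IsAlgebraicOverSet {D : Type*} [DivisionRing D] (k : Set D) (x : D) : Prop :=
  ∃ (N : ℕ) (b : Fin N → D),
    (∀ y ∈ Subfield.closure (insert x k), ∃ c : Fin N → D,
      (∀ i, c i ∈ k) ∧ y = ∑ i, c i * b i) ∧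
    (∀ y ∈ Subfield.closure (insert x k), ∃ c : Fin N → D,
      (∀ i, c i ∈ k) ∧ y = ∑ i, b i * c i)

section Aux

variable {k D : Type*} [DivisionRing k] [DivisionRing D]
  (ι : k →+* D) (v : D → ℤ)
  (hvmul : ∀ x y : D, x ≠ 0 → y ≠ 0 → v (x * y) = v x + v y)
  (hvadd : ∀ x y : D, x ≠ 0 → y ≠ 0 → x + y ≠ 0 → min (v x) (v y) ≤ v (x + y))
  (hvconst : ∀ a : k, a ≠ 0 → v (ι a) = 0)

include ι hvmul hvconst in
theorem aux_vneg (w : D) (hw : w ≠ 0) : v (-w) = v w := by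
  have h1 : (-1 : k) ≠ 0 := by norm_num
  have h2 : (-w) = ι (-1) * w := by rw [map_neg, map_one, neg_one_mul]
  rw [h2, hvmul _ _ (by simp [map_neg, map_one]) hw, hvconst _ h1, zero_add]

include ι hvmul hvadd hvconst in
theorem aux_two (x y : D) (hx : x ≠ 0) (hy : y ≠ 0) (hne : v x ≠ v y) :
    x + y ≠ 0 ∧ v (x + y) = min (v x) (v y) := by
  have hsum : x + y ≠ 0 := by
    intro h
    have hxy : x = -y := (neg_eq_of_add_eq_zero_left h).symm
    exact hne (by rw [hxy, aux_vneg ι v hvmul hvconst y hy])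
  refine ⟨hsum, ?_⟩
  have key : ∀ x y : D, x ≠ 0 → y ≠ 0 → x + y ≠ 0 → v x < v y → v (x + y) = v x := by
    intro x y hx hy hs hlt
    have h1 := hvadd x y hx hy hs
    have h2 := hvadd (x + y) (-y) hs (neg_ne_zero.2 hy) (by simpa using hx)
    rw [aux_vneg ι v hvmul hvconst y hy] at h2
    have h3 : v ((x + y) + -y) = v x := by rw [add_neg_cancel_right]
    rw [h3] at h2
    omega
  rcases lt_or_gt_of_ne hne with h | h
  · rw [key x y hx hy hsum h]; omega
  · rw [add_comm] at hsum ⊢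
    rw [key y x hy hx hsum h]; omega

include ι hvmul hvadd hvconst in
theorem aux_sum {ιx : Type*} (s : Finset ιx) (t : ιx → D)
    (h0 : ∀ i ∈ s, t i ≠ 0)
    (hinj : ∀ i ∈ s, ∀ j ∈ s, v (t i) = v (t j) → i = j)
    (hne : s.Nonempty) :
    (∑ i ∈ s, t i) ≠ 0 ∧ ∃ i ∈ s, v (∑ i ∈ s, t i) = v (t i) := by
  classical
  induction s using Finset.cons_induction with
  | empty => exact absurd hne (by simp)
  | cons a s ha ih =>
    rw [Finset.sum_cons]
    by_cases hs : s.Nonempty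
    · obtain ⟨hS0, i, his, hvi⟩ := ih (fun i hi => h0 i (Finset.mem_cons_of_mem hi))
        (fun i hi j hj => hinj i (Finset.mem_cons_of_mem hi) j (Finset.mem_cons_of_mem hj)) hs
      have hta : t a ≠ 0 := h0 a (Finset.mem_cons_self a s)
      have hvne : v (t a) ≠ v (∑ i ∈ s, t i) := by
        rw [hvi]
        intro h
        exact ha (by
          have := hinj a (Finset.mem_cons_self a s) i (Finset.mem_cons_of_mem his) h
          rwa [this])
      obtain ⟨hs0, hvmin⟩ := aux_two ι v hvmul hvadd hvconst (t a) (∑ i ∈ s, t i) hta hS0 hvne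
      refine ⟨hs0, ?_⟩
      rcases min_cases (v (t a)) (v (∑ i ∈ s, t i)) with ⟨hm, _⟩ | ⟨hm, _⟩
      · exact ⟨a, Finset.mem_cons_self a s, by rw [hvmin, hm]⟩
      · exact ⟨i, Finset.mem_cons_of_mem his, by rw [hvmin, hm, hvi]⟩
    · rw [Finset.not_nonempty_iff_eq_empty] at hs
      subst hs
      simp only [Finset.sum_empty, add_zero]
      exact ⟨h0 a (Finset.mem_cons_self a _), a, Finset.mem_cons_self a _, rfl⟩

include ι hvmul hvconst in
theorem aux_vpow (w : D) (hw : w ≠ 0) (n : ℕ) : v (w ^ n) = n * v w := by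
  induction n with
  | zero =>
    have : (1 : D) = ι 1 := (map_one ι).symm
    simp only [pow_zero, Nat.cast_zero, zero_mul, this]
    exact hvconst 1 one_ne_zero
  | succ n ih =>
    rw [pow_succ, hvmul _ _ (pow_ne_zero n hw) hw, ih]
    push_cast; ring

end Aux

/-- The skew Laurent series division ring `k_{σ,δ}((z))` is a regular extension of `k`.
Here `σ` is an automorphism of `k` and `δ` a `σ`-derivation, and the division ring `D`
models `k_{σ,δ}((z))`: it carries the `z`-adic valuation `v` (multiplicative, ultrametric,
trivial on the coefficient field `ι(k)`, with `v(z) = 1`), and every element of valuation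
`0` is, up to subtracting its constant coefficient in `k`, of nonzero valuation.  Then
every element of `D` algebraic over `k` lies in `k`. -/
theorem skew_laurent_series_regular
    {k D : Type*} [DivisionRing k] [DivisionRing D]
    (σ : k ≃+* k) (δ : k →+ k)
    (hδ : ∀ a b : k, δ (a * b) = σ a * δ b + δ a * b)
    (ι : k →+* D) (z : D) (hz : z ≠ 0)
    (v : D → ℤ) (hvz : v z = 1)
    (hvmul : ∀ x y : D, x ≠ 0 → y ≠ 0 → v (x * y) = v x + v y)
    (hvadd : ∀ x y : D, x ≠ 0 → y ≠ 0 → x + y ≠ 0 → min (v x) (v y) ≤ v (x + y))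
    (hvconst : ∀ a : k, a ≠ 0 → v (ι a) = 0)
    (hres : ∀ x : D, x ≠ 0 → v x = 0 →
      ∃ a : k, x = ι a ∨ (x - ι a ≠ 0 ∧ v (x - ι a) ≠ 0)) :
    ∀ x : D, IsAlgebraicOverSet (Set.range ι) x → x ∈ Set.range ι := by
  classical
  intro x hx
  obtain ⟨N, b, hleft, -⟩ := hx
  -- Central claim: no nonzero element of the closure has nonzero valuation.
  have claim : ∀ w : D, w ∈ Subfield.closure (insert x (Set.range ι)) → w ≠ 0 →
      v w ≠ 0 → False := by
    intro w hwmem hw hvw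
    letI : Module k D := Module.compHom D ι
    set W : Submodule k D := Submodule.span k (Set.range b) with hW
    have hmem : ∀ n : ℕ, w ^ n ∈ W := by
      intro n
      obtain ⟨c, hc, hsum⟩ := hleft (w ^ n) (pow_mem hwmem n)
      rw [hsum]
      refine Submodule.sum_mem _ (fun i _ => ?_)
      obtain ⟨a, ha⟩ := hc i
      rw [← ha]
      exact Submodule.smul_mem _ a (Submodule.subset_span (Set.mem_range_self i))
    set f : Fin (N + 1) → W := fun n => ⟨w ^ (n : ℕ), hmem n⟩ with hf
    haveI : Module.Finite k W := Module.Finite.span_of_finite k (Set.finite_range b)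
    have hni : ¬ LinearIndependent k f := by
      intro h
      have h1 := h.fintype_card_le_finrank
      have h2 : Module.finrank k W ≤ N := by
        have := finrank_range_le_card (R := k) b
        rw [Set.finrank] at this
        simpa using this
      simp only [Fintype.card_fin] at h1
      omega
    obtain ⟨g, hg0, i0, hi0⟩ := Fintype.not_linearIndependent_iff.mp hni
    have hg0' : ∑ i, ι (g i) * w ^ (i : ℕ) = 0 := by
      have := congrArg (Subtype.val) hg0
      simp [f, Submodule.coe_sum] at this
      exact this
    set t : Fin (N + 1) → D := fun i => ι (g i) * w ^ (i : ℕ) with ht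
    set s : Finset (Fin (N + 1)) := Finset.univ.filter (fun i => g i ≠ 0) with hs
    have hsum_eq : ∑ i ∈ s, t i = ∑ i, t i := by
      refine Finset.sum_subset (Finset.filter_subset _ _) (fun i _ hi => ?_)
      simp only [hs, Finset.mem_filter, Finset.mem_univ, true_and, not_not] at hi
      simp [ht, hi]
    have h0 : ∀ i ∈ s, t i ≠ 0 := by
      intro i hi
      simp only [hs, Finset.mem_filter] at hi
      exact mul_ne_zero (fun h => hi.2 (ι.injective (by rw [h, map_zero])))
        (pow_ne_zero _ hw)
    have hvt : ∀ i ∈ s, v (t i) = (i : ℤ) * v w := by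
      intro i hi
      simp only [hs, Finset.mem_filter] at hi
      rw [ht]
      simp only
      rw [hvmul _ _ (fun h => hi.2 (ι.injective (by rw [h, map_zero]))) (pow_ne_zero _ hw),
        hvconst _ hi.2, aux_vpow ι v hvmul hvconst w hw, zero_add]
    have hinj : ∀ i ∈ s, ∀ j ∈ s, v (t i) = v (t j) → i = j := by
      intro i hi j hj hvij
      rw [hvt i hi, hvt j hj] at hvij
      have : (i : ℤ) = (j : ℤ) := mul_right_cancel₀ hvw hvij
      exact Fin.ext (by exact_mod_cast this)
    have hne : s.Nonempty := ⟨i0, by simp [hs, hi0]⟩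
    obtain ⟨hne0, -⟩ := aux_sum ι v hvmul hvadd hvconst s t h0 hinj hne
    rw [hsum_eq] at hne0
    exact hne0 hg0'
  -- Now the main argument.
  by_cases hx0 : x = 0
  · exact ⟨0, by rw [map_zero, hx0]⟩
  have hxmem : x ∈ Subfield.closure (insert x (Set.range ι)) :=
    Subfield.subset_closure (Set.mem_insert _ _)
  by_cases hvx : v x = 0
  · obtain ⟨a, ha⟩ := hres x hx0 hvx
    rcases ha with ha | ⟨hy0, hvy⟩
    · exact ⟨a, ha.symm⟩
    · exfalso
      have hamem : ι a ∈ Subfield.closure (insert x (Set.range ι)) :=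
        Subfield.subset_closure (Set.mem_insert_of_mem _ (Set.mem_range_self a))
      exact claim (x - ι a) (sub_mem hxmem hamem) hy0 hvy
  · exact absurd (claim x hxmem hx0 hvx) (fun h => h)
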